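/- Let w = (i_m, …, i_2, i_1) be a finite sequence of positive integers, representing the element x_{i_m} ⋯ x_{i_2} x_{i_1} of Thompson's group F. Define a rewrite step on such sequences: replace an adjacent pair (i_{j+1}, i_j) with i_{j+1} < i_j − 1 by the pair (i_j − 1, i_{j+1}). Then: each rewrite step preserves the represented element of F; every sequence of successive rewrite steps starting from w has length at most m(m−1)/2; and any sequence obtained from w by a maximal chain of rewrite steps satisfies the anti-normal condition i_{k+1} ≥ i_k − 1 for all k (hence is the anti-normal form of the represented element). -/

import Mathlib

/-- The defining relations of Thompson's group `F`:
`xₙ xₖ (xₖ xₙ₊₁)⁻¹` for all `k < n`. -/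
def thompsonRels : Set (FreeGroup ℕ) :=
  {r | ∃ n k : ℕ, k < n ∧
    r = FreeGroup.of n * FreeGroup.of k * (FreeGroup.of k * FreeGroup.of (n + 1))⁻¹}

/-- Thompson's group `F` as a presented group. -/
abbrev ThompsonF : Type := PresentedGroup thompsonRels

/-- The generator `xₙ` of Thompson's group `F`. -/
def xF (n : ℕ) : ThompsonF := PresentedGroup.of n

/-- Word length of `g` with respect to `{x₀, x₁}`: the least `m` such that `g`
is a product of `m` elements of `{x₀, x₁} ∪ {x₀, x₁}⁻¹`. -/
noncomputable def wordLength (g : ThompsonF) : ℕ :=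
  sInf {m | ∃ l : List ThompsonF, l.length = m ∧
    (∀ a ∈ l, a ∈ ({xF 0, xF 1} : Set ThompsonF) ∨ a⁻¹ ∈ ({xF 0, xF 1} : Set ThompsonF)) ∧
    l.prod = g}

/-- One rewrite step on sequences of positive integers (written as lists, read
left to right): an adjacent pair `(i_{j+1}, i_j) = (a, b)` with `a < b - 1`
(equivalently `a + 1 < b`) is replaced by `(b - 1, a)`. -/
def RewriteStep (l l' : List ℕ) : Prop :=
  ∃ (u v : List ℕ) (a b : ℕ), a + 1 < b ∧
    l = u ++ a :: b :: v ∧ l' = u ++ (b - 1) :: a :: v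

/-- The basic commutation in `F`: for `a + 1 < b`, `xₐ x_b = x_{b-1} xₐ`. -/
lemma xF_swap {a b : ℕ} (h : a + 1 < b) : xF a * xF b = xF (b - 1) * xF a := by
  have hmem : (FreeGroup.of (b - 1) * FreeGroup.of a *
      (FreeGroup.of a * FreeGroup.of (b - 1 + 1))⁻¹ : FreeGroup ℕ) ∈
      Subgroup.normalClosure thompsonRels :=
    Subgroup.subset_normalClosure ⟨b - 1, a, by omega, rfl⟩
  have hb : b - 1 + 1 = b := by omega
  rw [hb] at hmem
  have h1 : ((QuotientGroup.mk (FreeGroup.of (b - 1) * FreeGroup.of a *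
      (FreeGroup.of a * FreeGroup.of b)⁻¹) : ThompsonF)) = 1 :=
    (QuotientGroup.eq_one_iff _).mpr hmem
  have h2 : xF (b - 1) * xF a * (xF a * xF b)⁻¹ = 1 := by
    have h1' : PresentedGroup.mk thompsonRels (FreeGroup.of (b - 1) * FreeGroup.of a *
      (FreeGroup.of a * FreeGroup.of b)⁻¹) = 1 := h1
    simpa [xF, PresentedGroup.of] using h1'
  have := mul_inv_eq_one.mp h2
  exact this.symm

/-- Insertion of an element into a list, performing all rewrite
moves at the head. -/
def ins (a : ℕ) : List ℕ → List ℕ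
  | [] => [a]
  | b :: r => if a + 1 < b then (b - 1) :: ins a r else a :: b :: r

lemma ins_length (a : ℕ) (r : List ℕ) : (ins a r).length = r.length + 1 := by
  induction r with
  | nil => rfl
  | cons b r ih => simp only [ins]; split <;> simp [ih]

lemma ins_sum_le (a : ℕ) (r : List ℕ) : (ins a r).sum ≤ a + r.sum := by
  induction r with
  | nil => simp [ins]
  | cons b r ih =>
    simp only [ins]; split
    · simp only [List.sum_cons]; omega
    · simp [List.sum_cons]

lemma ins_sum_ge (a : ℕ) (r : List ℕ) : a + r.sum ≤ (ins a r).sum + r.length := by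
  induction r with
  | nil => simp [ins]
  | cons b r ih =>
    simp only [ins]; split
    · rename_i hc
      simp only [List.sum_cons, List.length_cons]; omega
    · simp [List.sum_cons]

lemma ins_comm (a b : ℕ) (h : a + 1 < b) :
    ∀ r : List ℕ, ins a (ins b r) = ins (b - 1) (ins a r)
  | [] => by
    simp only [ins]
    split_ifs <;> first | rfl | omega
  | c :: r => by
    have ih := ins_comm a b h r
    by_cases h1 : b + 1 < c
    · have h2 : a + 1 < c := by omega
      have h3 : a + 1 < c - 1 := by omega
      have h4 : b - 1 + 1 < c - 1 := by omega
      simp only [ins]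
      rw [if_pos h1, if_pos h2]
      simp only [ins]
      rw [if_pos h3, if_pos h4, ih]
    · by_cases h2 : a + 1 < c
      · simp only [ins]
        rw [if_neg h1, if_pos h2]
        simp only [ins]
        rw [if_pos h, if_pos h2, if_neg (by omega)]
      · simp only [ins]
        rw [if_neg h1, if_neg h2]
        simp only [ins]
        rw [if_pos h, if_neg h2, if_neg (by omega)]

/-- The anti-normal form of a word, obtained by iterated insertion. -/
def nfL (l : List ℕ) : List ℕ := l.foldr ins []

lemma nfL_cons (a : ℕ) (l : List ℕ) : nfL (a :: l) = ins a (nfL l) := rfl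

lemma nfL_append (u t : List ℕ) : nfL (u ++ t) = u.foldr ins (nfL t) := by
  simp [nfL, List.foldr_append]

lemma nfL_length (l : List ℕ) : (nfL l).length = l.length := by
  induction l with
  | nil => rfl
  | cons a l ih => rw [nfL_cons, ins_length, ih, List.length_cons]

lemma nfL_sum_le (l : List ℕ) : (nfL l).sum ≤ l.sum := by
  induction l with
  | nil => simp [nfL]
  | cons a l ih =>
    rw [nfL_cons, List.sum_cons]
    have := ins_sum_le a (nfL l); omega

lemma sum_le_nfL (l : List ℕ) : l.sum ≤ (nfL l).sum + l.length.choose 2 := by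
  induction l with
  | nil => simp [nfL]
  | cons x l ih =>
    have h1 := ins_sum_ge x (nfL l)
    have h2 := nfL_length l
    have h3 := Nat.choose_succ_succ l.length 1
    norm_num [Nat.choose_one_right] at h3
    rw [List.sum_cons, List.length_cons]
    rw [nfL_cons] at *
    omega

lemma step_nfL {l l' : List ℕ} (h : RewriteStep l l') : nfL l' = nfL l := by
  obtain ⟨u, v, a, b, hab, rfl, rfl⟩ := h
  rw [nfL_append, nfL_append]
  congr 1
  show ins (b - 1) (ins a (nfL v)) = ins a (ins b (nfL v))
  exact (ins_comm a b hab (nfL v)).symm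

lemma step_sum {l l' : List ℕ} (h : RewriteStep l l') : l.sum = l'.sum + 1 := by
  obtain ⟨u, v, a, b, hab, rfl, rfl⟩ := h
  simp only [List.sum_append, List.sum_cons]
  omega

/-- The decreasing measure. -/
def mu (l : List ℕ) : ℕ := l.sum - (nfL l).sum

lemma step_mu {l l' : List ℕ} (h : RewriteStep l l') : mu l = mu l' + 1 := by
  have h1 := step_sum h
  have h2 := step_nfL h
  have h3 := nfL_sum_le l'
  unfold mu
  rw [← h2]
  omega

lemma chain_of_no_step (l : List ℕ) (h : ¬ ∃ l', RewriteStep l l') :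
    List.Chain' (fun a b => b ≤ a + 1) l := by
  induction l with
  | nil => exact List.isChain_nil
  | cons x t ih =>
    cases t with
    | nil => exact List.isChain_singleton _
    | cons y s =>
      rw [List.Chain', List.isChain_cons_cons]
      refine ⟨?_, ih ?_⟩
      · by_contra hxy
        exact h ⟨(y - 1) :: x :: s, [], s, x, y, by omega, rfl, rfl⟩
      · rintro ⟨l', u, v, a, b, hab, he, he'⟩
        exact h ⟨x :: u ++ (b - 1) :: a :: v, x :: u, v, a, b, hab, by rw [he]; rfl, rfl⟩

/-- For a sequence `w = (i_m, …, i_2, i_1)` of positive integers representing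
`x_{i_m} ⋯ x_{i_2} x_{i_1} ∈ F`:
(1) each rewrite step preserves the represented element of `F`;
(2) every chain of successive rewrite steps starting from `w` has length at
most `m(m-1)/2`;
(3) any sequence obtained from `w` by a maximal chain of rewrite steps
satisfies the anti-normal condition `i_{k+1} ≥ i_k - 1` for all `k`. -/
theorem rewrite_to_anti_normal_form (w : List ℕ) (hw : ∀ i ∈ w, 1 ≤ i) :
    (∀ l l' : List ℕ, (∀ i ∈ l, 1 ≤ i) → RewriteStep l l' →
      (l.map xF).prod = (l'.map xF).prod) ∧
    (∀ (N : ℕ) (c : Fin (N + 1) → List ℕ), c 0 = w →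
      (∀ j : Fin N, RewriteStep (c j.castSucc) (c j.succ)) →
      N ≤ w.length * (w.length - 1) / 2) ∧
    (∀ l : List ℕ, Relation.ReflTransGen RewriteStep w l →
      (¬ ∃ l', RewriteStep l l') → List.Chain' (fun a b => b ≤ a + 1) l) := by
  refine ⟨?_, ?_, ?_⟩
  · rintro l l' - ⟨u, v, a, b, hab, rfl, rfl⟩
    simp only [List.map_append, List.map_cons, List.prod_append, List.prod_cons]
    congr 1
    rw [← mul_assoc, ← mul_assoc, xF_swap hab]
  · intro N c hc0 hstep
    have key : ∀ k, ∀ hk : k ≤ N, mu (c ⟨k, Nat.lt_succ_of_le hk⟩) + k ≤ mu (c 0) := by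
      intro k
      induction k with
      | zero => intro hk; simp
      | succ k ihk =>
        intro hk
        have hkN : k < N := hk
        have hs := hstep ⟨k, hkN⟩
        have hcast : (⟨k, hkN⟩ : Fin N).castSucc = ⟨k, Nat.lt_succ_of_le (Nat.le_of_lt hkN)⟩ := rfl
        have hsucc : (⟨k, hkN⟩ : Fin N).succ = ⟨k + 1, Nat.lt_succ_of_le hk⟩ := rfl
        rw [hcast, hsucc] at hs
        have hmu := step_mu hs
        have := ihk (Nat.le_of_lt hkN)
        omega
    have hN := key N le_rfl
    have hb : mu w ≤ w.length.choose 2 := by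
      have h1 := sum_le_nfL w
      unfold mu; omega
    rw [hc0] at hN
    have : N ≤ w.length.choose 2 := by omega
    rwa [Nat.choose_two_right] at this
  · intro l _ h
    exact chain_of_no_step l h
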